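/- Let A, C : (0,∞) → ℝ be differentiable with A(r) > 0, A(r)C(r) = 1/4, A(r) − rA′(r) > 0, and A′(r)C′(r) > −1/(4r²) for all r > 0. Then for every r > 0, −1/r < −C′(r)/C(r) < 1/r. -/

import Mathlib

/-- The bound (43) of the paper: under the axially symmetric regularity
conditions `A > 0`, `AC = 1/4`, `A - rA' > 0` and `A'C' > -1/(4r²)`,
the polar value `ν'|_γ = -C'/C` satisfies `-1/r < -C'/C < 1/r`. -/
theorem polar_nu_prime_bound (A C : ℝ → ℝ)
    (hAd : ∀ r > (0 : ℝ), DifferentiableAt ℝ A r)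
    (hCd : ∀ r > (0 : ℝ), DifferentiableAt ℝ C r)
    (hApos : ∀ r > (0 : ℝ), 0 < A r)
    (hAC : ∀ r > (0 : ℝ), A r * C r = 1 / 4)
    (h1 : ∀ r > (0 : ℝ), 0 < A r - r * deriv A r)
    (h2 : ∀ r > (0 : ℝ), -(1 / (4 * r ^ 2)) < deriv A r * deriv C r) :
    ∀ r > (0 : ℝ), -(1 / r) < -deriv C r / C r ∧ -deriv C r / C r < 1 / r := by
  intro r hr
  have haA := hApos r hr
  have hac := hAC r hr
  have hCpos : 0 < C r := by nlinarith
  have hev : (fun x => A x * C x) =ᶠ[nhds r] (fun _ => (1:ℝ)/4) := by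
    filter_upwards [IsOpen.mem_nhds isOpen_Ioi (Set.mem_Ioi.mpr hr)] with x hx
    exact hAC x hx
  have hd0 : deriv (fun x => A x * C x) r = 0 := by
    rw [Filter.EventuallyEq.deriv_eq hev]; simp
  have hmul : deriv A r * C r + A r * deriv C r = 0 := by
    rw [← deriv_mul (hAd r hr) (hCd r hr)]; exact hd0
  have hAne : A r ≠ 0 := ne_of_gt haA
  have hCne : C r ≠ 0 := ne_of_gt hCpos
  have hC' : deriv C r = -(deriv A r * C r) / A r := by
    field_simp; linarith
  -- -C'/C = A'/A
  have heq : -deriv C r / C r = deriv A r / A r := by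
    rw [hC']; field_simp
  rw [heq]
  set a := A r
  set a' := deriv A r
  have h1' := h1 r hr
  -- from h2: a'^2/(4 a^2) < 1/(4 r^2)
  have hb := h2 r hr
  rw [hC'] at hb
  have hsq : a' ^ 2 * r ^ 2 < a ^ 2 := by
    have h4 : a * C r = 1/4 := hac
    have hb' : -(1 / (4 * r ^ 2)) < a' * (-(a' * C r) / a) := hb
    rw [neg_div, mul_neg, neg_lt_neg_iff] at hb'
    have he : a' * (a' * C r / a) = a' ^ 2 * C r / a := by ring
    rw [he, div_lt_div_iff₀ (by positivity) (by positivity)] at hb'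
    nlinarith
  constructor
  · rw [neg_lt, ← neg_div, div_lt_div_iff₀ haA hr]
    nlinarith
  · rw [div_lt_div_iff₀ haA hr]
    nlinarith
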